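/- Let G be a graph and X, Y ⊆ V(G) disjoint with |X| ≤ |Y|. Assume the bipartite-density theorem: there is C ≥ 1 such that for every t ≥ 3, every bipartite K_t-minor-free graph with parts S, T satisfies e ≤ C·t·√(log t)·√(|S||T|) + (t−2)(|S|+|T|). If G is K_t-minor-free with t ≥ 3, t ≤ k, and every vertex of Y has at least 3C·k neighbors in X where k ≥ t, then |Y| ≤ (log t)·|X|·(t/k)². -/

import Mathlib

open SimpleGraph

def HasMinor {V W : Type*} (G : SimpleGraph V) (H : SimpleGraph W) : Prop :=
  ∃ X : W → Set V, (∀ w, (G.induce (X w)).Connected) ∧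
    (∀ w₁ w₂, w₁ ≠ w₂ → Disjoint (X w₁) (X w₂)) ∧
    (∀ w₁ w₂, H.Adj w₁ w₂ → ∃ a ∈ X w₁, ∃ b ∈ X w₂, G.Adj a b)

lemma hasMinor_of_map {V W U : Type*} {G : SimpleGraph V} {G₂ : SimpleGraph W}
    {H : SimpleGraph U} (f : W → V) (hf : Function.Injective f)
    (hadj : ∀ a b, G₂.Adj a b → G.Adj (f a) (f b)) (h : HasMinor G₂ H) :
    HasMinor G H := by
  obtain ⟨B, hconn, hdisj, hedge⟩ := h
  refine ⟨fun u => f '' B u, ?_, ?_, ?_⟩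
  · intro u
    let φ : (G₂.induce (B u)) →g (G.induce (f '' B u)) :=
      ⟨fun a => ⟨f a.1, ⟨a.1, a.2, rfl⟩⟩, fun {a b} hab => hadj _ _ hab⟩
    exact (hconn u).map φ (by rintro ⟨v, a, ha, rfl⟩; exact ⟨⟨a, ha⟩, rfl⟩)
  · intro u₁ u₂ hne
    exact (Set.disjoint_image_iff hf).mpr (hdisj u₁ u₂ hne)
  · intro u₁ u₂ hadj'
    obtain ⟨a, ha, b, hb, hab⟩ := hedge u₁ u₂ hadj'
    exact ⟨f a, ⟨a, ha, rfl⟩, f b, ⟨b, hb, rfl⟩, hadj a b hab⟩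

/-- assuming the unbalanced bipartite density theorem with constant
`C`, if every vertex of `Y` has at least `3C·k` neighbours in `X` (with `X`, `Y`
disjoint, `|X| ≤ |Y|`, `G` `K_t`-minor-free, `k ≥ t ≥ 3`), then
`|Y| ≤ (log t)·|X|·(t/k)²`. -/
theorem stmt_18 (C : ℝ) (hC : 1 ≤ C)
    (bipDensity : ∀ (W : Type u) [Fintype W] (G' : SimpleGraph W) (S T : Set W)
      (t : ℕ), 3 ≤ t → ¬ HasMinor G' (⊤ : SimpleGraph (Fin t)) →
      Disjoint S T → S ∪ T = Set.univ →
      (∀ u v, G'.Adj u v → (u ∈ S ∧ v ∈ T) ∨ (u ∈ T ∧ v ∈ S)) →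
      (G'.edgeSet.ncard : ℝ) ≤
        C * t * Real.sqrt (Real.log t) * Real.sqrt ((S.ncard : ℝ) * (T.ncard : ℝ)) +
          ((t : ℝ) - 2) * ((S.ncard : ℝ) + (T.ncard : ℝ)))
    {V : Type u} [Fintype V] (G : SimpleGraph V) (t k : ℕ) (ht : 3 ≤ t)
    (htk : t ≤ k) (hG : ¬ HasMinor G (⊤ : SimpleGraph (Fin t)))
    (X Y : Set V) (hXY : Disjoint X Y) (hcard : X.ncard ≤ Y.ncard)
    (hdeg : ∀ y ∈ Y, 3 * C * (k : ℝ) ≤ ({x ∈ X | G.Adj y x}.ncard : ℝ)) :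
    (Y.ncard : ℝ) ≤ Real.log t * (X.ncard : ℝ) * ((t : ℝ) / (k : ℝ)) ^ 2 := by
  classical
  have ht3 : (3:ℝ) ≤ (t:ℝ) := by exact_mod_cast ht
  have hlogt : 0 ≤ Real.log t := Real.log_nonneg (by linarith)
  have hPnn : (0:ℝ) ≤ (X.ncard : ℝ) := by positivity
  rcases Set.eq_empty_or_nonempty Y with hYe | hYne
  · rw [hYe]
    simp only [Set.ncard_empty, Nat.cast_zero]
    exact mul_nonneg (mul_nonneg hlogt hPnn) (by positivity)
  have htkR : (t:ℝ) ≤ (k:ℝ) := by exact_mod_cast htk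
  have hkpos : (0:ℝ) < (k:ℝ) := by linarith
  -- the bipartite graph on `X ∪ Y`
  let W : Type u := ↥(X ∪ Y)
  let G' : SimpleGraph W :=
    { Adj := fun a b => G.Adj ↑a ↑b ∧ (((a:V) ∈ X ∧ (b:V) ∈ Y) ∨ ((a:V) ∈ Y ∧ (b:V) ∈ X))
      symm := by
        constructor; rintro a b ⟨hab, h | h⟩
        · exact ⟨hab.symm, Or.inr ⟨h.2, h.1⟩⟩
        · exact ⟨hab.symm, Or.inl ⟨h.2, h.1⟩⟩
      loopless := ⟨fun a h => G.loopless.irrefl _ h.1⟩ }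
  have hG' : ¬ HasMinor G' (⊤ : SimpleGraph (Fin t)) := fun h =>
    hG (hasMinor_of_map (G₂ := G') Subtype.val Subtype.coe_injective (fun a b hab => hab.1) h)
  let S : Set W := {w | (w:V) ∈ X}
  let T : Set W := {w | (w:V) ∈ Y}
  have hSX : Subtype.val '' S = X := by
    ext z
    constructor
    · rintro ⟨w, hw, rfl⟩; exact hw
    · intro hz; exact ⟨⟨z, Or.inl hz⟩, hz, rfl⟩
  have hTY : Subtype.val '' T = Y := by
    ext z
    constructor
    · rintro ⟨w, hw, rfl⟩; exact hw
    · intro hz; exact ⟨⟨z, Or.inr hz⟩, hz, rfl⟩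
  have hScard : S.ncard = X.ncard := by
    rw [← hSX, Set.ncard_image_of_injective _ Subtype.coe_injective]
  have hTcard : T.ncard = Y.ncard := by
    rw [← hTY, Set.ncard_image_of_injective _ Subtype.coe_injective]
  have hST : Disjoint S T := by
    rw [Set.disjoint_left]
    intro w hwS hwT
    exact Set.disjoint_left.1 hXY hwS hwT
  have hSTuniv : S ∪ T = Set.univ := by
    ext w
    simp only [S, T, Set.mem_union, Set.mem_setOf_eq, Set.mem_univ, iff_true]
    exact w.2
  have hbip : ∀ u v, G'.Adj u v → (u ∈ S ∧ v ∈ T) ∨ (u ∈ T ∧ v ∈ S) := by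
    rintro u v ⟨-, h | h⟩
    · exact Or.inl h
    · exact Or.inr h
  have hE := bipDensity W G' S T t ht hG' hST hSTuniv hbip
  rw [hScard, hTcard] at hE
  -- lower bound on the number of edges
  have key : 3 * C * (k:ℝ) * (Y.ncard : ℝ) ≤ (G'.edgeSet.ncard : ℝ) := by
    let TF : Finset W := Finset.univ.filter (fun w => (w:V) ∈ Y)
    let A : W → Finset W := fun w => Finset.univ.filter (fun x => (x:V) ∈ X ∧ G.Adj ↑w ↑x)
    let E : W → Finset (Sym2 W) := fun w => (A w).image (fun x => s(x, w))
    have hEcard : ∀ w, (E w).card = (A w).card := fun w =>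
      Finset.card_image_of_injective _ (fun x x' h => Sym2.congr_left.mp h)
    have hEsub : ∀ w ∈ TF, E w ⊆ G'.edgeSet.toFinset := by
      intro w hw e he
      simp only [E, Finset.mem_image] at he
      obtain ⟨x, hx, rfl⟩ := he
      simp only [A, Finset.mem_filter, Finset.mem_univ, true_and] at hx
      rw [Set.mem_toFinset, SimpleGraph.mem_edgeSet]
      have hwY : (w:V) ∈ Y := by simpa [TF] using hw
      exact ⟨hx.2.symm, Or.inl ⟨hx.1, hwY⟩⟩
    have hdisjE : ∀ w₁ ∈ TF, ∀ w₂ ∈ TF, w₁ ≠ w₂ → Disjoint (E w₁) (E w₂) := by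
      intro w₁ h1 w₂ h2 hne
      rw [Finset.disjoint_left]
      intro e he1 he2
      simp only [E, Finset.mem_image] at he1 he2
      obtain ⟨x₁, hx₁, hx₁e⟩ := he1
      obtain ⟨x₂, hx₂, hx₂e⟩ := he2
      simp only [A, Finset.mem_filter, Finset.mem_univ, true_and] at hx₁ hx₂
      rw [← hx₂e, Sym2.eq_iff] at hx₁e
      rcases hx₁e with ⟨-, h⟩ | ⟨h1', h2'⟩
      · exact hne h
      · have hw2Y : (w₂:V) ∈ Y := by simpa [TF] using h2
        rw [← h1'] at hw2Y
        exact Set.disjoint_left.1 hXY hx₁.1 hw2Y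
    have hsum : ∑ w ∈ TF, (A w).card ≤ G'.edgeSet.toFinset.card := by
      calc ∑ w ∈ TF, (A w).card = ∑ w ∈ TF, (E w).card := by simp [hEcard]
        _ = (TF.biUnion E).card := (Finset.card_biUnion hdisjE).symm
        _ ≤ _ := Finset.card_le_card (Finset.biUnion_subset.mpr hEsub)
    have hA : ∀ w ∈ TF, 3 * C * (k:ℝ) ≤ ((A w).card : ℝ) := by
      intro w hw
      have hwY : (w:V) ∈ Y := by simpa [TF] using hw
      have himg : (A w).image Subtype.val = {x ∈ X | G.Adj ↑w x}.toFinset := by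
        ext z
        simp only [Finset.mem_image, A, Finset.mem_filter, Finset.mem_univ, true_and,
          Set.mem_toFinset, Set.mem_sep_iff]
        constructor
        · rintro ⟨x, hx, rfl⟩; exact hx
        · intro hz; exact ⟨⟨z, Or.inl hz.1⟩, hz, rfl⟩
      have hAc : (A w).card = {x ∈ X | G.Adj ↑w x}.ncard := by
        rw [← Finset.card_image_of_injective (A w) Subtype.coe_injective, himg,
          ← Set.ncard_eq_toFinset_card']
      rw [hAc]
      exact hdeg _ hwY
    have hTF : TF.card = Y.ncard := by
      have himg : TF.image Subtype.val = Y.toFinset := by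
        ext z
        simp only [Finset.mem_image, TF, Finset.mem_filter, Finset.mem_univ, true_and,
          Set.mem_toFinset]
        constructor
        · rintro ⟨x, hx, rfl⟩; exact hx
        · intro hz; exact ⟨⟨z, Or.inr hz⟩, hz, rfl⟩
      rw [← Finset.card_image_of_injective TF Subtype.coe_injective, himg,
        ← Set.ncard_eq_toFinset_card']
    have hlow : 3 * C * (k:ℝ) * (TF.card : ℝ) ≤ ((∑ w ∈ TF, (A w).card : ℕ) : ℝ) := by
      rw [Nat.cast_sum]
      calc 3 * C * (k:ℝ) * (TF.card : ℝ) = ∑ _w ∈ TF, 3 * C * (k:ℝ) := by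
            rw [Finset.sum_const, nsmul_eq_mul]; ring
        _ ≤ ∑ w ∈ TF, ((A w).card : ℝ) := Finset.sum_le_sum hA
    rw [← hTF]
    calc 3 * C * (k:ℝ) * (TF.card : ℝ) ≤ ((∑ w ∈ TF, (A w).card : ℕ) : ℝ) := hlow
      _ ≤ (G'.edgeSet.toFinset.card : ℝ) := by exact_mod_cast hsum
      _ = (G'.edgeSet.ncard : ℝ) := by rw [Set.ncard_eq_toFinset_card']
  -- combine
  set P : ℝ := (X.ncard : ℝ) with hP
  set Q : ℝ := (Y.ncard : ℝ) with hQ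
  have hQpos : 0 < Q := by
    rw [hQ]
    exact_mod_cast (Set.ncard_pos (Set.toFinite Y)).mpr hYne
  have hPQ : P ≤ Q := by rw [hP, hQ]; exact_mod_cast hcard
  set L : ℝ := Real.log t with hL
  have hCpos : (0:ℝ) < C := by linarith
  have h2 : ((t:ℝ) - 2) * (P + Q) ≤ C * (k:ℝ) * (2 * Q) := by
    have ha : (t:ℝ) - 2 ≤ C * (k:ℝ) := by nlinarith
    have hb : P + Q ≤ 2 * Q := by linarith
    have hc : (0:ℝ) ≤ P + Q := by positivity
    nlinarith
  have h1 : C * (k:ℝ) * Q ≤ C * (t:ℝ) * Real.sqrt L * Real.sqrt (P * Q) := by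
    nlinarith [key, hE]
  have h3 : (k:ℝ) * Q ≤ (t:ℝ) * Real.sqrt L * Real.sqrt (P * Q) := by
    rw [← mul_le_mul_iff_right₀ hCpos]
    calc C * ((k:ℝ) * Q) = C * (k:ℝ) * Q := by ring
      _ ≤ C * (t:ℝ) * Real.sqrt L * Real.sqrt (P * Q) := h1
      _ = C * ((t:ℝ) * Real.sqrt L * Real.sqrt (P * Q)) := by ring
  have hs := mul_self_le_mul_self (by positivity : (0:ℝ) ≤ (k:ℝ) * Q) h3
  have e1 : Real.sqrt L * Real.sqrt L = L := Real.mul_self_sqrt hlogt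
  have e2 : Real.sqrt (P * Q) * Real.sqrt (P * Q) = P * Q :=
    Real.mul_self_sqrt (by positivity)
  have h4 : (k:ℝ)^2 * Q^2 ≤ (t:ℝ)^2 * L * (P * Q) := by
    calc (k:ℝ)^2 * Q^2 = ((k:ℝ) * Q) * ((k:ℝ) * Q) := by ring
      _ ≤ ((t:ℝ) * Real.sqrt L * Real.sqrt (P * Q)) * ((t:ℝ) * Real.sqrt L * Real.sqrt (P * Q)) := hs
      _ = (t:ℝ)^2 * (Real.sqrt L * Real.sqrt L) * (Real.sqrt (P * Q) * Real.sqrt (P * Q)) := by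
            ring
      _ = (t:ℝ)^2 * L * (P * Q) := by rw [e1, e2]
  have h5 : Q * (k:ℝ)^2 ≤ (t:ℝ)^2 * L * P := by
    refine le_of_mul_le_mul_right ?_ hQpos
    calc Q * (k:ℝ)^2 * Q = (k:ℝ)^2 * Q^2 := by ring
      _ ≤ (t:ℝ)^2 * L * (P * Q) := h4
      _ = (t:ℝ)^2 * L * P * Q := by ring
  have hk2 : (0:ℝ) < (k:ℝ)^2 := by positivity
  rw [div_pow, show L * P * ((t:ℝ)^2 / (k:ℝ)^2) = ((t:ℝ)^2 * L * P) / (k:ℝ)^2 by ring,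
    le_div_iff₀ hk2]
  exact h5
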